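/- arXiv:2511.07613 — 3 statements merged into one kernel-verified Lean document; each statement's English description precedes it below -/
import Mathlib

section
/- Let A₁,...,A_N and B₁,...,B_N be bounded operators on a Hilbert space H, let λ₁,...,λ_N > 0, and let X be a bounded operator. Then ‖Σ_{n=1}^N λₙ^{1/2} AₙXBₙ‖ ≤ ‖Σ_{n=1}^N λₙ AₙAₙ*‖^{1/2} · ‖Σ_{n=1}^N Bₙ*Bₙ‖^{1/2} · ‖X‖. -/
open ContinuousLinearMap

/-- Cauchy–Schwarz operator-norm inequality for elementary transformers:
`‖∑ₙ λₙ^{1/2} Aₙ X Bₙ‖ ≤ ‖∑ₙ λₙ Aₙ Aₙ*‖^{1/2} ‖∑ₙ Bₙ* Bₙ‖^{1/2} ‖X‖`. -/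
theorem cauchy_schwarz_elementary_transformer {H : Type*} [NormedAddCommGroup H]
    [InnerProductSpace ℂ H] [CompleteSpace H] [TopologicalSpace.SeparableSpace H]
    (N : ℕ) (A B : Fin N → H →L[ℂ] H) (l : Fin N → ℝ) (hl : ∀ n, 0 < l n)
    (X : H →L[ℂ] H) :
    ‖∑ n, Real.sqrt (l n) • (A n ∘L X ∘L B n)‖ ≤
      Real.sqrt ‖∑ n, l n • (A n ∘L adjoint (A n))‖ *
        Real.sqrt ‖∑ n, adjoint (B n) ∘L B n‖ * ‖X‖ := by
  set T : H →L[ℂ] H := ∑ n, Real.sqrt (l n) • (A n ∘L X ∘L B n) with hT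
  set SA : H →L[ℂ] H := ∑ n, l n • (A n ∘L adjoint (A n)) with hSA
  set SB : H →L[ℂ] H := ∑ n, adjoint (B n) ∘L B n with hSB
  set K : ℝ := Real.sqrt ‖SA‖ * Real.sqrt ‖SB‖ * ‖X‖ with hK
  have hKnn : 0 ≤ K := by positivity
  -- sum of ‖B n x‖² bounded
  have hB : ∀ x : H, ∑ n, ‖B n x‖ ^ 2 ≤ ‖SB‖ * ‖x‖ ^ 2 := by
    intro x
    have h1 : ∑ n, ‖B n x‖ ^ 2 = RCLike.re (inner ℂ (SB x) x : ℂ) := by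
      rw [hSB]
      simp only [sum_apply, comp_apply, sum_inner, map_sum]
      refine Finset.sum_congr rfl fun n _ => ?_
      rw [adjoint_inner_left, ← @inner_self_eq_norm_sq ℂ]
    rw [h1]
    calc RCLike.re (inner ℂ (SB x) x : ℂ) ≤ ‖(inner ℂ (SB x) x : ℂ)‖ := RCLike.re_le_norm _
      _ ≤ ‖SB x‖ * ‖x‖ := norm_inner_le_norm _ _
      _ ≤ ‖SB‖ * ‖x‖ * ‖x‖ := by
          gcongr; exact le_opNorm _ _
      _ = ‖SB‖ * ‖x‖ ^ 2 := by ring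
  have hA : ∀ y : H, ∑ n, l n * ‖adjoint (A n) y‖ ^ 2 ≤ ‖SA‖ * ‖y‖ ^ 2 := by
    intro y
    have h1 : ∑ n, l n * ‖adjoint (A n) y‖ ^ 2 = RCLike.re (inner ℂ (SA y) y : ℂ) := by
      rw [hSA]
      simp only [sum_apply, sum_inner, map_sum, smul_apply, comp_apply]
      refine Finset.sum_congr rfl fun n _ => ?_
      rw [RCLike.real_smul_eq_coe_smul (K := ℂ), inner_smul_real_left,
        ← adjoint_inner_right, ← @inner_self_eq_norm_sq ℂ]
      simp
    rw [h1]
    calc RCLike.re (inner ℂ (SA y) y : ℂ) ≤ ‖(inner ℂ (SA y) y : ℂ)‖ := RCLike.re_le_norm _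
      _ ≤ ‖SA y‖ * ‖y‖ := norm_inner_le_norm _ _
      _ ≤ ‖SA‖ * ‖y‖ * ‖y‖ := by gcongr; exact le_opNorm _ _
      _ = ‖SA‖ * ‖y‖ ^ 2 := by ring
  have key : ∀ x y : H, ‖(inner ℂ (T x) y : ℂ)‖ ≤ K * ‖x‖ * ‖y‖ := by
    intro x y
    have hexp : (inner ℂ (T x) y : ℂ)
        = ∑ n, (Real.sqrt (l n) : ℂ) * inner ℂ (X (B n x)) (adjoint (A n) y) := by
      rw [hT]
      simp only [sum_apply, sum_inner, smul_apply, comp_apply]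
      refine Finset.sum_congr rfl fun n _ => ?_
      rw [RCLike.real_smul_eq_coe_smul (K := ℂ), inner_smul_real_left,
        ← adjoint_inner_right]
      simp [Complex.real_smul]
    rw [hexp]
    calc ‖∑ n, (Real.sqrt (l n) : ℂ) * inner ℂ (X (B n x)) (adjoint (A n) y)‖
        ≤ ∑ n, ‖(Real.sqrt (l n) : ℂ) * inner ℂ (X (B n x)) (adjoint (A n) y)‖ :=
          norm_sum_le _ _
      _ ≤ ∑ n, (‖X‖ * ‖B n x‖) * (Real.sqrt (l n) * ‖adjoint (A n) y‖) := by
          refine Finset.sum_le_sum fun n _ => ?_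
          rw [norm_mul, Complex.norm_real, Real.norm_eq_abs,
            abs_of_nonneg (Real.sqrt_nonneg _)]
          calc Real.sqrt (l n) * ‖(inner ℂ (X (B n x)) (adjoint (A n) y) : ℂ)‖
              ≤ Real.sqrt (l n) * (‖X (B n x)‖ * ‖adjoint (A n) y‖) := by
                gcongr; exact norm_inner_le_norm _ _
            _ ≤ Real.sqrt (l n) * ((‖X‖ * ‖B n x‖) * ‖adjoint (A n) y‖) := by
                gcongr
                exact le_opNorm _ _
            _ = (‖X‖ * ‖B n x‖) * (Real.sqrt (l n) * ‖adjoint (A n) y‖) := by ring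
      _ ≤ Real.sqrt (∑ n, (‖X‖ * ‖B n x‖) ^ 2) *
            Real.sqrt (∑ n, (Real.sqrt (l n) * ‖adjoint (A n) y‖) ^ 2) :=
          Real.sum_mul_le_sqrt_mul_sqrt _ _ _
      _ ≤ K * ‖x‖ * ‖y‖ := by
          have e1 : ∑ n, (‖X‖ * ‖B n x‖) ^ 2 = ‖X‖ ^ 2 * ∑ n, ‖B n x‖ ^ 2 := by
            rw [Finset.mul_sum]; exact Finset.sum_congr rfl fun n _ => by ring
          have e2 : ∑ n, (Real.sqrt (l n) * ‖adjoint (A n) y‖) ^ 2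
              = ∑ n, l n * ‖adjoint (A n) y‖ ^ 2 := by
            refine Finset.sum_congr rfl fun n _ => ?_
            rw [mul_pow, Real.sq_sqrt (hl n).le]
          rw [e1, e2]
          calc Real.sqrt (‖X‖ ^ 2 * ∑ n, ‖B n x‖ ^ 2) *
                Real.sqrt (∑ n, l n * ‖adjoint (A n) y‖ ^ 2)
              ≤ Real.sqrt (‖X‖ ^ 2 * (‖SB‖ * ‖x‖ ^ 2)) *
                Real.sqrt (‖SA‖ * ‖y‖ ^ 2) := by
                gcongr
                · exact hB x
                · exact hA y
            _ = K * ‖x‖ * ‖y‖ := by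
                rw [Real.sqrt_mul (by positivity), Real.sqrt_mul (opNorm_nonneg _),
                  Real.sqrt_mul (opNorm_nonneg _), Real.sqrt_sq (norm_nonneg _),
                  Real.sqrt_sq (norm_nonneg _), Real.sqrt_sq (norm_nonneg _), hK]
                ring
  refine opNorm_le_bound _ hKnn fun x => ?_
  rcases eq_or_ne (T x) 0 with h0 | h0
  · rw [h0, norm_zero]; positivity
  · have h1 := key x (T x)
    rw [@inner_self_eq_norm_sq_to_K ℂ] at h1
    have hTx : 0 < ‖T x‖ := norm_pos_iff.mpr h0
    have h2 : ‖T x‖ ^ 2 ≤ K * ‖x‖ * ‖T x‖ := by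
      simpa [norm_pow, Complex.norm_real, abs_of_nonneg (norm_nonneg (T x))] using h1
    nlinarith [hTx]
end

section
/- Let A, B, C, D, X be bounded operators on a Hilbert space H with A*A ≤ C*C and BB* ≤ DD*. Then ‖AXB‖ ≤ ‖CXD‖ in the operator norm. -/
open ContinuousLinearMap

lemma norm_apply_le_of_pos_sub {H : Type*} [NormedAddCommGroup H]
    [InnerProductSpace ℂ H] [CompleteSpace H] (A C : H →L[ℂ] H)
    (h : ((adjoint C ∘L C) - (adjoint A ∘L A)).IsPositive) (x : H) : ‖A x‖ ≤ ‖C x‖ := by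
  have h2 := h.2 x
  rw [reApplyInnerSelf_apply, sub_apply, inner_sub_left, map_sub] at h2
  simp only [comp_apply, adjoint_inner_left] at h2
  rw [inner_self_eq_norm_sq, inner_self_eq_norm_sq] at h2
  nlinarith [norm_nonneg (A x), norm_nonneg (C x)]

lemma comp_norm_le {H : Type*} [NormedAddCommGroup H]
    [InnerProductSpace ℂ H] [CompleteSpace H] (A C R : H →L[ℂ] H)
    (h : ∀ x, ‖A x‖ ≤ ‖C x‖) : ‖A ∘L R‖ ≤ ‖C ∘L R‖ := by
  refine opNorm_le_bound _ (norm_nonneg _) fun x => ?_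
  calc ‖(A ∘L R) x‖ = ‖A (R x)‖ := rfl
    _ ≤ ‖C (R x)‖ := h _
    _ = ‖(C ∘L R) x‖ := rfl
    _ ≤ ‖C ∘L R‖ * ‖x‖ := le_opNorm _ _

/-- Double monotonicity in the operator norm: if `A*A ≤ C*C` and `BB* ≤ DD*`
(in the positive-operator order), then `‖AXB‖ ≤ ‖CXD‖`. -/
theorem double_monotonicity_operator_norm {H : Type*} [NormedAddCommGroup H]
    [InnerProductSpace ℂ H] [CompleteSpace H] (A B C D X : H →L[ℂ] H)
    (h1 : ((adjoint C ∘L C) - (adjoint A ∘L A)).IsPositive)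
    (h2 : ((D ∘L adjoint D) - (B ∘L adjoint B)).IsPositive) :
    ‖A ∘L X ∘L B‖ ≤ ‖C ∘L X ∘L D‖ := by
  have hA : ∀ x, ‖A x‖ ≤ ‖C x‖ := norm_apply_le_of_pos_sub A C h1
  have hB : ∀ x, ‖adjoint B x‖ ≤ ‖adjoint D x‖ := by
    apply norm_apply_le_of_pos_sub
    simpa [adjoint_adjoint] using h2
  have step1 : ‖A ∘L (X ∘L B)‖ ≤ ‖C ∘L (X ∘L B)‖ := comp_norm_le _ _ _ hA
  have step2 : ‖C ∘L X ∘L B‖ ≤ ‖C ∘L X ∘L D‖ := by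
    have := comp_norm_le (adjoint B) (adjoint D) (adjoint X ∘L adjoint C) hB
    calc ‖C ∘L X ∘L B‖ = ‖adjoint (C ∘L X ∘L B)‖ := ((adjoint : _ ≃ₗᵢ⋆[ℂ] _).norm_map _).symm
      _ = ‖adjoint B ∘L (adjoint X ∘L adjoint C)‖ := by simp [adjoint_comp, comp_assoc]
      _ ≤ ‖adjoint D ∘L (adjoint X ∘L adjoint C)‖ := this
      _ = ‖adjoint (C ∘L X ∘L D)‖ := by simp [adjoint_comp, comp_assoc]
      _ = ‖C ∘L X ∘L D‖ := (adjoint : _ ≃ₗᵢ⋆[ℂ] _).norm_map _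
  exact le_trans step1 step2
end

section
/- Let A₁,...,A_N, B₁,...,B_N be bounded operators on a Hilbert space H and X a Hilbert–Schmidt operator. Then ‖Σ_{n=1}^N AₙXBₙ‖₂ ≤ ‖(Σ_{n=1}^N Aₙ*Aₙ)^{1/2} X‖₂ · ‖Σ_{n=1}^N Bₙ*Bₙ‖^{1/2}. -/
open ContinuousLinearMap
open scoped ENNReal NNReal

/-- The Hilbert–Schmidt norm of a bounded operator, with respect to a Hilbert basis `e`
(valued in `ℝ≥0∞`). -/
noncomputable def hsNorm {H : Type*} [NormedAddCommGroup H] [InnerProductSpace ℂ H]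
    {ι : Type*} (e : HilbertBasis ι ℂ H) (X : H →L[ℂ] H) : ℝ≥0∞ :=
  (∑' i, (‖X (e i)‖₊ : ℝ≥0∞) ^ 2) ^ ((1 : ℝ) / 2)

section CSHSAux

open scoped InnerProductSpace ComplexConjugate

open ContinuousLinearMap
open scoped ENNReal NNReal InnerProductSpace ComplexConjugate

lemma csHS_oo (x : ℝ) (h : 0 ≤ x) : ENNReal.ofReal (x^2) = (ENNReal.ofReal x)^2 := ENNReal.ofReal_pow h 2

variable {H : Type*} [NormedAddCommGroup H] [InnerProductSpace ℂ H] [CompleteSpace H]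
  {ι : Type*} (e : HilbertBasis ι ℂ H)

lemma csHS_parseval (x : H) : (‖x‖₊ : ℝ≥0∞)^2 = ∑' i, (‖⟪e i, x⟫_ℂ‖₊ : ℝ≥0∞)^2 := by
  have hz : ∀ z : ℂ, ((‖z‖^2 : ℝ) : ℂ) = conj z * z := fun z => by
    rw [Complex.conj_mul']; push_cast; ring
  have h : HasSum (fun i => ((‖⟪e i, x⟫_ℂ‖^2 : ℝ) : ℂ)) (((‖x‖^2 : ℝ) : ℂ)) := by
    have h0 := e.hasSum_inner_mul_inner x x
    have heq : (fun i => ⟪x, e i⟫_ℂ * ⟪e i, x⟫_ℂ) = fun i => ((‖⟪e i, x⟫_ℂ‖^2 : ℝ) : ℂ) := by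
      funext i; rw [hz, inner_conj_symm]
    rw [heq] at h0
    rw [show ((‖x‖^2 : ℝ) : ℂ) = ⟪x, x⟫_ℂ from by
      push_cast; exact (inner_self_eq_norm_sq_to_K (𝕜 := ℂ) x).symm]
    exact h0
  have hr : HasSum (fun i => (‖⟪e i, x⟫_ℂ‖^2 : ℝ)) ((‖x‖^2 : ℝ)) :=
    Complex.hasSum_ofReal.mp h
  have h2 := (ENNReal.ofReal_tsum_of_nonneg (fun i => sq_nonneg _) hr.summable).symm
  rw [hr.tsum_eq] at h2
  calc (‖x‖₊ : ℝ≥0∞)^2 = ENNReal.ofReal (‖x‖^2) := by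
        rw [csHS_oo _ (norm_nonneg _), ← ENNReal.ofReal_coe_nnreal, coe_nnnorm]
    _ = ∑' i, ENNReal.ofReal (‖⟪e i, x⟫_ℂ‖^2) := h2.symm
    _ = ∑' i, (‖⟪e i, x⟫_ℂ‖₊ : ℝ≥0∞)^2 := by
        congr 1; funext i; rw [csHS_oo _ (norm_nonneg _), ← ENNReal.ofReal_coe_nnreal, coe_nnnorm]

lemma csHS_hs2_adjoint (M : H →L[ℂ] H) :
    ∑' i, (‖M (e i)‖₊ : ℝ≥0∞)^2 = ∑' i, (‖(adjoint M) (e i)‖₊ : ℝ≥0∞)^2 := by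
  have key : ∀ (i j : ι), (‖⟪e j, M (e i)⟫_ℂ‖₊ : ℝ≥0∞)^2 = (‖⟪e i, (adjoint M) (e j)⟫_ℂ‖₊ : ℝ≥0∞)^2 := by
    intro i j
    rw [← adjoint_inner_left, ← inner_conj_symm (e i), RCLike.nnnorm_conj]
  calc ∑' i, (‖M (e i)‖₊ : ℝ≥0∞)^2 = ∑' i, ∑' j, (‖⟪e j, M (e i)⟫_ℂ‖₊ : ℝ≥0∞)^2 := by
        simp_rw [← csHS_parseval e]
    _ = ∑' j, ∑' i, (‖⟪e i, (adjoint M) (e j)⟫_ℂ‖₊ : ℝ≥0∞)^2 := by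
        simp_rw [key]; exact ENNReal.tsum_comm
    _ = ∑' j, (‖(adjoint M) (e j)‖₊ : ℝ≥0∞)^2 := by simp_rw [← csHS_parseval e]

lemma csHS_key_vec (N : ℕ) (B : Fin N → H →L[ℂ] H) (v : Fin N → H) :
    ‖∑ n, adjoint (B n) (v n)‖^2 ≤ ‖∑ n, adjoint (B n) ∘L B n‖ * ∑ n, ‖v n‖^2 := by
  set w := ∑ n, adjoint (B n) (v n) with hw
  set T := ∑ n, adjoint (B n) ∘L B n with hT
  have hTn : (0:ℝ) ≤ ‖T‖ := norm_nonneg _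
  have hv : (0:ℝ) ≤ ∑ n, ‖v n‖^2 := Finset.sum_nonneg fun n _ => sq_nonneg _
  have hin : ⟪w, w⟫_ℂ = ∑ n, ⟪B n w, v n⟫_ℂ := by
    nth_rewrite 2 [hw]
    rw [inner_sum]
    exact Finset.sum_congr rfl fun n _ => adjoint_inner_right (B n) w (v n)
  have h1' : ‖w‖^2 ≤ ∑ n, ‖B n w‖ * ‖v n‖ := by
    rw [← inner_self_eq_norm_sq (𝕜 := ℂ) w, hin, map_sum]
    refine Finset.sum_le_sum fun n _ => ?_
    calc RCLike.re ⟪B n w, v n⟫_ℂ ≤ ‖⟪B n w, v n⟫_ℂ‖ := RCLike.re_le_norm _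
      _ ≤ ‖B n w‖ * ‖v n‖ := norm_inner_le_norm _ _
  have h2 : ∑ n, ‖B n w‖^2 ≤ ‖T‖ * ‖w‖^2 := by
    have hh : ∑ n, ‖B n w‖^2 = RCLike.re ⟪w, T w⟫_ℂ := by
      rw [hT, ContinuousLinearMap.sum_apply, inner_sum, map_sum]
      refine (Finset.sum_congr rfl fun n _ => ?_).symm
      rw [ContinuousLinearMap.comp_apply, adjoint_inner_right, inner_self_eq_norm_sq]
    rw [hh]
    calc RCLike.re ⟪w, T w⟫_ℂ ≤ ‖⟪w, T w⟫_ℂ‖ := RCLike.re_le_norm _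
      _ ≤ ‖w‖ * ‖T w‖ := norm_inner_le_norm _ _
      _ ≤ ‖w‖ * (‖T‖ * ‖w‖) := mul_le_mul_of_nonneg_left (T.le_opNorm w) (norm_nonneg _)
      _ = ‖T‖ * ‖w‖^2 := by ring
  have hcs : (∑ n, ‖B n w‖ * ‖v n‖)^2 ≤ (∑ n, ‖B n w‖^2) * (∑ n, ‖v n‖^2) :=
    Finset.sum_mul_sq_le_sq_mul_sq _ _ _
  rcases eq_or_lt_of_le (norm_nonneg w) with h0 | h0
  · rw [← h0]
    simpa using mul_nonneg hTn hv
  · have hww : (0:ℝ) < ‖w‖^2 := by positivity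
    have hfin : (‖w‖^2)^2 ≤ (‖T‖ * ‖w‖^2) * (∑ n, ‖v n‖^2) := by
      calc (‖w‖^2)^2 ≤ (∑ n, ‖B n w‖ * ‖v n‖)^2 := by
            apply pow_le_pow_left₀ (sq_nonneg _) h1'
        _ ≤ (∑ n, ‖B n w‖^2) * (∑ n, ‖v n‖^2) := hcs
        _ ≤ (‖T‖ * ‖w‖^2) * (∑ n, ‖v n‖^2) := mul_le_mul_of_nonneg_right h2 hv
    nlinarith [hfin, hww]

lemma csHS_sqrt_apply_sq (N : ℕ) (A : Fin N → H →L[ℂ] H) (x : H) :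
    ‖cfc Real.sqrt (∑ n, adjoint (A n) ∘L A n) x‖^2 = ∑ n, ‖A n x‖^2 := by
  set P := ∑ n, adjoint (A n) ∘L A n with hP
  have hPpos : (0:H →L[ℂ] H) ≤ P := by
    refine Finset.sum_nonneg fun n _ => ?_
    simpa [ContinuousLinearMap.star_eq_adjoint, ContinuousLinearMap.mul_def] using
      star_mul_self_nonneg (A n)
  set S := cfc Real.sqrt P with hS
  have hsa : IsSelfAdjoint S := cfc_predicate _ _
  have hSS : S ∘L S = P := by
    have : S * S = P := by
      rw [← sq]
      calc S ^ 2 = cfc (fun t => Real.sqrt t ^ 2) P := (cfc_pow (ha := hPpos.isSelfAdjoint) ..).symm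
        _ = cfc (fun t : ℝ => t) P :=
            cfc_congr fun t ht => Real.sq_sqrt (spectrum_nonneg_of_nonneg hPpos ht)
        _ = P := cfc_id ℝ P (ha := hPpos.isSelfAdjoint)
    exact this
  have h1 : ⟪S x, S x⟫_ℂ = ⟪x, P x⟫_ℂ := by
    calc ⟪S x, S x⟫_ℂ = ⟪adjoint S x, S x⟫_ℂ := by rw [hsa.adjoint_eq]
      _ = ⟪x, S (S x)⟫_ℂ := adjoint_inner_left S (S x) x
      _ = ⟪x, P x⟫_ℂ := by rw [← ContinuousLinearMap.comp_apply, hSS]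
  rw [← inner_self_eq_norm_sq (𝕜 := ℂ) (S x), h1, hP, ContinuousLinearMap.sum_apply,
    inner_sum, map_sum]
  refine Finset.sum_congr rfl fun n _ => ?_
  rw [ContinuousLinearMap.comp_apply, adjoint_inner_right, inner_self_eq_norm_sq]

lemma csHS_nsq (x : H) : (‖x‖₊ : ℝ≥0∞)^2 = ENNReal.ofReal (‖x‖^2) := by
  rw [csHS_oo _ (norm_nonneg _), ← ENNReal.ofReal_coe_nnreal, coe_nnnorm]

theorem csHS_main_sq {H : Type*} [NormedAddCommGroup H]
    [InnerProductSpace ℂ H] [CompleteSpace H]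
    {ι : Type*} (e : HilbertBasis ι ℂ H) (N : ℕ) (A B : Fin N → H →L[ℂ] H)
    (X : H →L[ℂ] H) :
    ∑' i, (‖(∑ n, A n ∘L X ∘L B n) (e i)‖₊ : ℝ≥0∞)^2 ≤
      (∑' i, (‖(cfc Real.sqrt (∑ n, adjoint (A n) ∘L A n) ∘L X) (e i)‖₊ : ℝ≥0∞)^2) *
        ENNReal.ofReal ‖∑ n, adjoint (B n) ∘L B n‖ := by
  set T := ∑ n, adjoint (B n) ∘L B n with hT
  set S := cfc Real.sqrt (∑ n, adjoint (A n) ∘L A n) with hS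
  set Y := ∑ n, A n ∘L X ∘L B n with hY
  have hYadj : ∀ x : H, adjoint Y x = ∑ n, adjoint (B n) (adjoint (A n ∘L X) x) := by
    intro x
    rw [hY, map_sum, ContinuousLinearMap.sum_apply]
    refine Finset.sum_congr rfl fun n _ => ?_
    rw [show A n ∘L X ∘L B n = (A n ∘L X) ∘L B n from rfl, adjoint_comp,
      ContinuousLinearMap.comp_apply]
  calc ∑' i, (‖Y (e i)‖₊ : ℝ≥0∞)^2
      = ∑' i, (‖adjoint Y (e i)‖₊ : ℝ≥0∞)^2 := csHS_hs2_adjoint e Y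
    _ ≤ ∑' i, (ENNReal.ofReal ‖T‖ * ∑ n, (‖adjoint (A n ∘L X) (e i)‖₊ : ℝ≥0∞)^2) := by
        refine ENNReal.tsum_le_tsum fun i => ?_
        rw [csHS_nsq]
        have hk := csHS_key_vec N B (fun n => adjoint (A n ∘L X) (e i))
        rw [← hYadj (e i)] at hk
        refine le_trans (ENNReal.ofReal_le_ofReal hk) ?_
        rw [ENNReal.ofReal_mul (norm_nonneg _), ENNReal.ofReal_sum_of_nonneg
          (fun n _ => sq_nonneg _)]
        rw [← hT]
        exact le_of_eq (by congr 1; exact Finset.sum_congr rfl fun n _ => (csHS_nsq _).symm)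
    _ = ENNReal.ofReal ‖T‖ * ∑ n, ∑' i, (‖adjoint (A n ∘L X) (e i)‖₊ : ℝ≥0∞)^2 := by
        rw [ENNReal.tsum_mul_left]
        congr 1
        exact Summable.tsum_finsetSum fun n _ => ENNReal.summable
    _ = ENNReal.ofReal ‖T‖ * ∑ n, ∑' i, (‖(A n ∘L X) (e i)‖₊ : ℝ≥0∞)^2 := by
        congr 1
        exact Finset.sum_congr rfl fun n _ => (csHS_hs2_adjoint e (A n ∘L X)).symm
    _ = ENNReal.ofReal ‖T‖ * ∑' i, ∑ n, (‖(A n ∘L X) (e i)‖₊ : ℝ≥0∞)^2 := by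
        rw [Summable.tsum_finsetSum fun n _ => ENNReal.summable]
    _ = (∑' i, (‖(S ∘L X) (e i)‖₊ : ℝ≥0∞)^2) * ENNReal.ofReal ‖T‖ := by
        rw [mul_comm]
        congr 1
        refine tsum_congr fun i => ?_
        refine Eq.symm ?_
        rw [csHS_nsq, ContinuousLinearMap.comp_apply, hS, csHS_sqrt_apply_sq N A (X (e i)),
          ENNReal.ofReal_sum_of_nonneg (fun n _ => sq_nonneg _)]
        exact Finset.sum_congr rfl fun n _ => by
          rw [ContinuousLinearMap.comp_apply, csHS_nsq]

end CSHSAux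

/-- For bounded operators `A₁,...,A_N, B₁,...,B_N` and a Hilbert–Schmidt `X`,
`‖∑ₙ Aₙ X Bₙ‖₂ ≤ ‖(∑ₙ Aₙ*Aₙ)^{1/2} X‖₂ ‖∑ₙ Bₙ*Bₙ‖^{1/2}`, where `(∑ₙ Aₙ*Aₙ)^{1/2}` is the
positive square root (continuous functional calculus). -/
theorem cauchy_schwarz_hilbert_schmidt {H : Type*} [NormedAddCommGroup H]
    [InnerProductSpace ℂ H] [CompleteSpace H] [TopologicalSpace.SeparableSpace H]
    {ι : Type*} (e : HilbertBasis ι ℂ H) (N : ℕ) (A B : Fin N → H →L[ℂ] H)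
    (X : H →L[ℂ] H) (hX : hsNorm e X ≠ ⊤) :
    hsNorm e (∑ n, A n ∘L X ∘L B n) ≤
      hsNorm e (cfc Real.sqrt (∑ n, adjoint (A n) ∘L A n) ∘L X) *
        ENNReal.ofReal (Real.sqrt ‖∑ n, adjoint (B n) ∘L B n‖) := by
  have h := csHS_main_sq e N A B X
  unfold hsNorm
  have h2 := ENNReal.rpow_le_rpow h (by norm_num : (0:ℝ) ≤ 1/2)
  rw [ENNReal.mul_rpow_of_nonneg _ _ (by norm_num : (0:ℝ) ≤ 1/2)] at h2
  refine h2.trans (le_of_eq ?_)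
  congr 1
  rw [ENNReal.ofReal_rpow_of_nonneg (norm_nonneg _) (by norm_num : (0:ℝ) ≤ 1/2),
    ← Real.sqrt_eq_rpow]
end
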